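/- A function μ : ZMod 5 → ℝ satisfies (μ n ≥ 0 for all n, μ is positive definite, and μ 0 = 1) if and only if μ lies in the convex hull of the following four functions p₁, p₂, p₃, p₄ : ZMod 5 → ℝ: p₁ 0 = 1 and p₁ n = 0 for n ≠ 0; p₂ 0 = 1, p₂ 1 = p₂ 4 = γ, p₂ 2 = p₂ 3 = 0; p₃ 0 = 1, p₃ 2 = p₃ 3 = γ, p₃ 1 = p₃ 4 = 0; p₄ n = 1 for all n; where γ = (√5 - 1)/2. -/

import Mathlib

open Finset
open scoped ComplexOrder

/-- A real-valued function on an additive abelian group is positive definite if all its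
"quadratic forms" with complex coefficients are real and nonnegative. -/
def IsPosDef {G : Type*} [AddCommGroup G] (g : G → ℝ) : Prop :=
  ∀ (N : ℕ) (x : Fin N → G) (c : Fin N → ℂ),
    0 ≤ ∑ i, ∑ j, c i * (starRingEnd ℂ) (c j) * (g (x i - x j) : ℂ)

noncomputable def γ : ℝ := (Real.sqrt 5 - 1) / 2

/-- `p₁` is the delta function at `0`. -/
def p₁ : ZMod 5 → ℝ := fun n => if n = 0 then 1 else 0

/-- `p₂ 0 = 1`, `p₂ 1 = p₂ 4 = γ`, `p₂ 2 = p₂ 3 = 0`. -/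
noncomputable def p₂ : ZMod 5 → ℝ := fun n =>
  if n = 0 then 1 else if n = 1 ∨ n = 4 then γ else 0

/-- `p₃ 0 = 1`, `p₃ 2 = p₃ 3 = γ`, `p₃ 1 = p₃ 4 = 0`. -/
noncomputable def p₃ : ZMod 5 → ℝ := fun n =>
  if n = 0 then 1 else if n = 2 ∨ n = 3 then γ else 0

/-- `p₄` is the constant function `1`. -/
def p₄ : ZMod 5 → ℝ := fun _ => 1

open Real in
lemma sqrt5_sq : √5 * √5 = 5 := Real.mul_self_sqrt (by norm_num)

open Real in
lemma gamma_sq : γ * γ = 1 - γ := by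
  simp only [γ]; nlinarith [sqrt5_sq]

open Real in
lemma gamma_nonneg : 0 ≤ γ := by
  simp only [γ]; nlinarith [sqrt5_sq, Real.sqrt_nonneg 5]

open Real in
lemma gamma_lt_one : γ < 1 := by
  simp only [γ]; nlinarith [sqrt5_sq, Real.sqrt_nonneg 5]

open Real in
lemma gamma_pos : 0 < γ := by
  simp only [γ]; nlinarith [sqrt5_sq, Real.sqrt_nonneg 5]

section CosValues
open Real

lemma cos25 : cos (2*π/5) = (√5 - 1)/4 := by
  have h : (2*π/5) = 2 * (π/5) := by ring
  rw [h, Real.cos_two_mul, Real.cos_pi_div_five]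
  nlinarith [sqrt5_sq]

lemma cos45 : cos (4*π/5) = -(1 + √5)/4 := by
  have h : (4*π/5) = π - π/5 := by ring
  rw [h, Real.cos_pi_sub, Real.cos_pi_div_five]; ring

lemma cos65 : cos (6*π/5) = -(1 + √5)/4 := by
  have h : (6*π/5) = π/5 + π := by ring
  rw [h, Real.cos_add_pi, Real.cos_pi_div_five]; ring

lemma cos85 : cos (8*π/5) = (√5 - 1)/4 := by
  have h : (8*π/5) = 2*π - 2*π/5 := by ring
  rw [h, Real.cos_two_pi_sub, cos25]

lemma cos125 : cos (12*π/5) = (√5 - 1)/4 := by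
  have h : (12*π/5) = 2*π/5 + (1:ℤ)*(2*π) := by push_cast; ring
  rw [h, Real.cos_add_int_mul_two_pi, cos25]

lemma cos165 : cos (16*π/5) = -(1 + √5)/4 := by
  have h : (16*π/5) = 6*π/5 + (1:ℤ)*(2*π) := by push_cast; ring
  rw [h, Real.cos_add_int_mul_two_pi, cos65]

lemma cos_shift (m : ℕ) (g h : ZMod 5) :
    cos (2*π*m*(g.val)/5) * cos (2*π*m*(h.val)/5)
      + sin (2*π*m*(g.val)/5) * sin (2*π*m*(h.val)/5)
      = cos (2*π*m*(((g - h : ZMod 5)).val)/5) := by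
  rw [← Real.cos_sub]
  have h0 : (((g.val : ℤ) - h.val - ((g - h : ZMod 5)).val : ℤ) : ZMod 5) = 0 := by
    push_cast [ZMod.natCast_val, ZMod.cast_id]
    ring
  obtain ⟨k, hk⟩ := (ZMod.intCast_zmod_eq_zero_iff_dvd _ 5).1 h0
  push_cast at hk
  have hkr : (g.val:ℝ) - h.val = ((g - h : ZMod 5)).val + 5*k := by
    have h2 : (g.val:ℤ) - h.val = ((g - h : ZMod 5)).val + 5*k := by linarith
    exact_mod_cast h2
  have harg : 2*π*m*(g.val)/5 - 2*π*m*(h.val)/5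
      = 2*π*m*(((g - h : ZMod 5)).val)/5 + ((m*k : ℤ)) * (2*π) := by
    push_cast
    linear_combination (2*π*(m:ℝ)/5) * hkr
  rw [harg, Real.cos_add_int_mul_two_pi]

lemma p2_val (n : ZMod 5) :
    p₂ n = √5/5 + (5 - √5)/5 * cos (2*π*(1:ℕ)*(n.val)/5) := by
  have h5 : n = 0 ∨ n = 1 ∨ n = 2 ∨ n = 3 ∨ n = 4 := by revert n; decide
  rcases h5 with rfl | rfl | rfl | rfl | rfl
  · rw [show ((0:ZMod 5)).val = 0 from rfl]
    norm_num [p₂]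
    ring
  · rw [show ((1:ZMod 5)).val = 1 from rfl, show 2*π*((1:ℕ):ℝ)*(1:ℕ)/5 = 2*π/5 by push_cast; ring, cos25]
    simp +decide [p₂, γ]
    nlinarith [sqrt5_sq]
  · rw [show ((2:ZMod 5)).val = 2 from rfl, show 2*π*((1:ℕ):ℝ)*(2:ℕ)/5 = 4*π/5 by push_cast; ring, cos45]
    simp +decide [p₂]
    nlinarith [sqrt5_sq]
  · rw [show ((3:ZMod 5)).val = 3 from rfl, show 2*π*((1:ℕ):ℝ)*(3:ℕ)/5 = 6*π/5 by push_cast; ring, cos65]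
    simp +decide [p₂]
    nlinarith [sqrt5_sq]
  · rw [show ((4:ZMod 5)).val = 4 from rfl, show 2*π*((1:ℕ):ℝ)*(4:ℕ)/5 = 8*π/5 by push_cast; ring, cos85]
    simp +decide [p₂, γ]
    nlinarith [sqrt5_sq]

lemma p3_val (n : ZMod 5) :
    p₃ n = √5/5 + (5 - √5)/5 * cos (2*π*(2:ℕ)*(n.val)/5) := by
  have h5 : n = 0 ∨ n = 1 ∨ n = 2 ∨ n = 3 ∨ n = 4 := by revert n; decide
  rcases h5 with rfl | rfl | rfl | rfl | rfl
  · rw [show ((0:ZMod 5)).val = 0 from rfl]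
    norm_num [p₃]
    ring
  · rw [show ((1:ZMod 5)).val = 1 from rfl, show 2*π*((2:ℕ):ℝ)*(1:ℕ)/5 = 4*π/5 by push_cast; ring, cos45]
    simp +decide [p₃]
    nlinarith [sqrt5_sq]
  · rw [show ((2:ZMod 5)).val = 2 from rfl, show 2*π*((2:ℕ):ℝ)*(2:ℕ)/5 = 8*π/5 by push_cast; ring, cos85]
    simp +decide [p₃, γ]
    nlinarith [sqrt5_sq]
  · rw [show ((3:ZMod 5)).val = 3 from rfl, show 2*π*((2:ℕ):ℝ)*(3:ℕ)/5 = 12*π/5 by push_cast; ring, cos125]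
    simp +decide [p₃, γ]
    nlinarith [sqrt5_sq]
  · rw [show ((4:ZMod 5)).val = 4 from rfl, show 2*π*((2:ℕ):ℝ)*(4:ℕ)/5 = 16*π/5 by push_cast; ring, cos165]
    simp +decide [p₃]
    nlinarith [sqrt5_sq]

end CosValues

lemma posdef_of_decomp {ι : Type} [Fintype ι] (p : ZMod 5 → ℝ) (lam : ι → ℝ)
    (v : ι → ZMod 5 → ℝ) (hlam : ∀ k, 0 ≤ lam k)
    (hd : ∀ g h : ZMod 5, p (g - h) = ∑ k, lam k * (v k g * v k h)) :
    IsPosDef p := by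
  intro N x c
  have key : ∑ i, ∑ j, c i * (starRingEnd ℂ) (c j) * (p (x i - x j) : ℂ)
      = ∑ k, (lam k : ℂ) * ((∑ i, c i * (v k (x i) : ℂ)) *
          (starRingEnd ℂ) (∑ i, c i * (v k (x i) : ℂ))) := by
    have h1 : ∀ i j, (p (x i - x j) : ℂ)
        = ∑ k, (lam k : ℂ) * ((v k (x i):ℂ) * (v k (x j):ℂ)) := by
      intro i j; rw [hd (x i) (x j)]; push_cast; rfl
    calc ∑ i, ∑ j, c i * (starRingEnd ℂ) (c j) * (p (x i - x j) : ℂ)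
        = ∑ i, ∑ j, ∑ k, (lam k : ℂ) *
            ((c i * (v k (x i):ℂ)) * ((starRingEnd ℂ) (c j) * (v k (x j):ℂ))) := by
          refine Finset.sum_congr rfl fun i _ => Finset.sum_congr rfl fun j _ => ?_
          rw [h1 i j, Finset.mul_sum]
          exact Finset.sum_congr rfl fun k _ => by ring
      _ = ∑ i, ∑ k, ∑ j, (lam k : ℂ) *
            ((c i * (v k (x i):ℂ)) * ((starRingEnd ℂ) (c j) * (v k (x j):ℂ))) :=
          Finset.sum_congr rfl fun i _ => Finset.sum_comm
      _ = ∑ k, ∑ i, ∑ j, (lam k : ℂ) *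
            ((c i * (v k (x i):ℂ)) * ((starRingEnd ℂ) (c j) * (v k (x j):ℂ))) :=
          Finset.sum_comm
      _ = ∑ k, (lam k : ℂ) * ((∑ i, c i * (v k (x i) : ℂ)) *
            (starRingEnd ℂ) (∑ i, c i * (v k (x i) : ℂ))) := by
          refine Finset.sum_congr rfl fun k _ => ?_
          rw [map_sum, Finset.sum_mul_sum, Finset.mul_sum]
          refine Finset.sum_congr rfl fun i _ => ?_
          rw [Finset.mul_sum]
          refine Finset.sum_congr rfl fun j _ => ?_
          rw [map_mul, Complex.conj_ofReal]
  rw [key]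
  apply Finset.sum_nonneg
  intro k _
  apply mul_nonneg (by exact_mod_cast hlam k)
  rw [Complex.mul_conj]
  exact_mod_cast Complex.normSq_nonneg _

lemma posdef_p1 : IsPosDef p₁ := by
  apply posdef_of_decomp (ι := ZMod 5) p₁ (fun _ => 1)
    (fun k g => if g = k then 1 else 0) (fun _ => zero_le_one)
  intro g h
  have hs : ∑ k : ZMod 5, (1:ℝ) * ((if g = k then 1 else 0) * (if h = k then 1 else 0))
      = if h = g then 1 else 0 := by
    simp [ite_mul, Finset.sum_ite_eq, eq_comm]
  rw [hs]
  rcases eq_or_ne g h with rfl | hne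
  · simp [p₁]
  · rw [if_neg (fun hh => hne hh.symm)]
    simp [p₁, sub_eq_zero, hne]

lemma posdef_p4 : IsPosDef p₄ := by
  apply posdef_of_decomp (ι := Fin 1) p₄ (fun _ => 1) (fun _ _ => 1) (fun _ => zero_le_one)
  intro g h
  simp [p₄]

open Real in
lemma posdef_p2 : IsPosDef p₂ := by
  apply posdef_of_decomp (ι := Fin 3) p₂ ![√5/5, (5 - √5)/5, (5 - √5)/5]
    ![fun _ => 1, fun g => cos (2*π*(1:ℕ)*(g.val)/5), fun g => sin (2*π*(1:ℕ)*(g.val)/5)]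
  · intro k
    fin_cases k <;> simp <;> nlinarith [sqrt5_sq, Real.sqrt_nonneg 5]
  · intro g h
    rw [Fin.sum_univ_three, p2_val (g - h), ← cos_shift 1 g h]
    simp only [Matrix.cons_val_zero, Matrix.cons_val_one, Matrix.head_cons,
      Matrix.cons_val_two, Matrix.tail_cons]
    ring

open Real in
lemma posdef_p3 : IsPosDef p₃ := by
  apply posdef_of_decomp (ι := Fin 3) p₃ ![√5/5, (5 - √5)/5, (5 - √5)/5]
    ![fun _ => 1, fun g => cos (2*π*(2:ℕ)*(g.val)/5), fun g => sin (2*π*(2:ℕ)*(g.val)/5)]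
  · intro k
    fin_cases k <;> simp <;> nlinarith [sqrt5_sq, Real.sqrt_nonneg 5]
  · intro g h
    rw [Fin.sum_univ_three, p3_val (g - h), ← cos_shift 2 g h]
    simp only [Matrix.cons_val_zero, Matrix.cons_val_one, Matrix.head_cons,
      Matrix.cons_val_two, Matrix.tail_cons]
    ring

lemma sym_of_posdef {G : Type*} [AddCommGroup G] (μ : G → ℝ) (h : IsPosDef μ) (n : G) :
    μ (-n) = μ n := by
  have H := h 2 ![0, n] ![1, Complex.I]
  simp only [Fin.sum_univ_two, Matrix.cons_val_zero, Matrix.cons_val_one, Matrix.head_cons] at H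
  rw [Complex.nonneg_iff] at H
  have him := H.2
  simp [Complex.add_im, Complex.mul_im, Complex.conj_im, Complex.conj_re] at him
  linarith

lemma form_ineq (μ : ZMod 5 → ℝ) (h : IsPosDef μ) (w : Fin 5 → ℝ) :
    0 ≤ w 0 * w 0 * μ 0 + w 0 * w 1 * μ 4 + w 0 * w 2 * μ 3 + w 0 * w 3 * μ 2 + w 0 * w 4 * μ 1
      + w 1 * w 0 * μ 1 + w 1 * w 1 * μ 0 + w 1 * w 2 * μ 4 + w 1 * w 3 * μ 3 + w 1 * w 4 * μ 2
      + w 2 * w 0 * μ 2 + w 2 * w 1 * μ 1 + w 2 * w 2 * μ 0 + w 2 * w 3 * μ 4 + w 2 * w 4 * μ 3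
      + w 3 * w 0 * μ 3 + w 3 * w 1 * μ 2 + w 3 * w 2 * μ 1 + w 3 * w 3 * μ 0 + w 3 * w 4 * μ 4
      + w 4 * w 0 * μ 4 + w 4 * w 1 * μ 3 + w 4 * w 2 * μ 2 + w 4 * w 3 * μ 1 + w 4 * w 4 * μ 0 := by
  have H := h 5 ![0,1,2,3,4] (fun i => ((w i : ℝ) : ℂ))
  have e00 : (0:ZMod 5) - 0 = 0 := by decide
  have e01 : (0:ZMod 5) - 1 = 4 := by decide
  have e02 : (0:ZMod 5) - 2 = 3 := by decide
  have e03 : (0:ZMod 5) - 3 = 2 := by decide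
  have e04 : (0:ZMod 5) - 4 = 1 := by decide
  have e10 : (1:ZMod 5) - 0 = 1 := by decide
  have e11 : (1:ZMod 5) - 1 = 0 := by decide
  have e12 : (1:ZMod 5) - 2 = 4 := by decide
  have e13 : (1:ZMod 5) - 3 = 3 := by decide
  have e14 : (1:ZMod 5) - 4 = 2 := by decide
  have e20 : (2:ZMod 5) - 0 = 2 := by decide
  have e21 : (2:ZMod 5) - 1 = 1 := by decide
  have e22 : (2:ZMod 5) - 2 = 0 := by decide
  have e23 : (2:ZMod 5) - 3 = 4 := by decide
  have e24 : (2:ZMod 5) - 4 = 3 := by decide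
  have e30 : (3:ZMod 5) - 0 = 3 := by decide
  have e31 : (3:ZMod 5) - 1 = 2 := by decide
  have e32 : (3:ZMod 5) - 2 = 1 := by decide
  have e33 : (3:ZMod 5) - 3 = 0 := by decide
  have e34 : (3:ZMod 5) - 4 = 4 := by decide
  have e40 : (4:ZMod 5) - 0 = 4 := by decide
  have e41 : (4:ZMod 5) - 1 = 3 := by decide
  have e42 : (4:ZMod 5) - 2 = 2 := by decide
  have e43 : (4:ZMod 5) - 3 = 1 := by decide
  have e44 : (4:ZMod 5) - 4 = 0 := by decide
  simp only [Fin.sum_univ_five, Matrix.cons_val_zero, Matrix.cons_val_one, Matrix.head_cons,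
    Matrix.cons_val_two, Matrix.tail_cons, Matrix.cons_val_three, Matrix.cons_val_four,
    e00, e01, e02, e03, e04, e10, e11, e12, e13, e14, e20, e21, e22, e23, e24, e30, e31, e32, e33, e34, e40, e41, e42, e43, e44, Complex.conj_ofReal] at H
  have H2 : (0:ℝ) ≤ w 0 * w 0 * μ 0 + w 0 * w 1 * μ 4 + w 0 * w 2 * μ 3 + w 0 * w 3 * μ 2 + w 0 * w 4 * μ 1
      + (w 1 * w 0 * μ 1 + w 1 * w 1 * μ 0 + w 1 * w 2 * μ 4 + w 1 * w 3 * μ 3 + w 1 * w 4 * μ 2)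
      + (w 2 * w 0 * μ 2 + w 2 * w 1 * μ 1 + w 2 * w 2 * μ 0 + w 2 * w 3 * μ 4 + w 2 * w 4 * μ 3)
      + (w 3 * w 0 * μ 3 + w 3 * w 1 * μ 2 + w 3 * w 2 * μ 1 + w 3 * w 3 * μ 0 + w 3 * w 4 * μ 4)
      + (w 4 * w 0 * μ 4 + w 4 * w 1 * μ 3 + w 4 * w 2 * μ 2 + w 4 * w 3 * μ 1 + w 4 * w 4 * μ 0) := by
    exact_mod_cast H
  linarith

theorem pos_posdef_normalized_iff_convexHull (μ : ZMod 5 → ℝ) :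
    ((∀ n, 0 ≤ μ n) ∧ IsPosDef μ ∧ μ 0 = 1) ↔
      μ ∈ convexHull ℝ ({p₁, p₂, p₃, p₄} : Set (ZMod 5 → ℝ)) := by
  constructor
  · rintro ⟨hpos, hpd, h0⟩
    -- symmetry
    have h4 : μ 4 = μ 1 := by
      have := sym_of_posdef μ hpd 1
      rwa [show (-1 : ZMod 5) = 4 by decide] at this
    have h3 : μ 3 = μ 2 := by
      have := sym_of_posdef μ hpd 2
      rwa [show (-2 : ZMod 5) = 3 by decide] at this
    set a := μ 1 with ha
    set b := μ 2 with hb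
    -- inequalities
    have hγ := gamma_sq
    have hγ0 := gamma_nonneg
    have hγ1 := gamma_lt_one
    have I1 : 0 ≤ 1 + γ * a - (1 + γ) * b := by
      have H := form_ineq μ hpd ![1, γ/2, -(1+γ)/2, -(1+γ)/2, γ/2]
      simp only [Matrix.cons_val_zero, Matrix.cons_val_one, Matrix.head_cons,
        Matrix.cons_val_two, Matrix.tail_cons, Matrix.cons_val_three, Matrix.cons_val_four,
        h0, h4, h3, ← ha, ← hb] at H
      have key : (1 * 1 * 1 + 1 * (γ / 2) * a + 1 * (-(1 + γ) / 2) * b + 1 * (-(1 + γ) / 2) * b + 1 * (γ / 2) * a +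
          γ / 2 * 1 * a + γ / 2 * (γ / 2) * 1 + γ / 2 * (-(1 + γ) / 2) * a + γ / 2 * (-(1 + γ) / 2) * b +
          γ / 2 * (γ / 2) * b + -(1 + γ) / 2 * 1 * b + -(1 + γ) / 2 * (γ / 2) * a +
          -(1 + γ) / 2 * (-(1 + γ) / 2) * 1 + -(1 + γ) / 2 * (-(1 + γ) / 2) * a + -(1 + γ) / 2 * (γ / 2) * b +
          -(1 + γ) / 2 * 1 * b + -(1 + γ) / 2 * (γ / 2) * b + -(1 + γ) / 2 * (-(1 + γ) / 2) * a +
          -(1 + γ) / 2 * (-(1 + γ) / 2) * 1 + -(1 + γ) / 2 * (γ / 2) * a + γ / 2 * 1 * a +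
          γ / 2 * (γ / 2) * b + γ / 2 * (-(1 + γ) / 2) * b + γ / 2 * (-(1 + γ) / 2) * a + γ / 2 * (γ / 2) * 1 : ℝ)
          = (5/2) * (1 + γ * a - (1 + γ) * b) := by
        linear_combination (1 - a/2 - b/2) * hγ
      nlinarith [H, key]
    have I2 : 0 ≤ 1 + γ * b - (1 + γ) * a := by
      have H := form_ineq μ hpd ![1, -(1+γ)/2, γ/2, γ/2, -(1+γ)/2]
      simp only [Matrix.cons_val_zero, Matrix.cons_val_one, Matrix.head_cons,
        Matrix.cons_val_two, Matrix.tail_cons, Matrix.cons_val_three, Matrix.cons_val_four,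
        h0, h4, h3, ← ha, ← hb] at H
      nlinarith [H, hγ, mul_comm γ γ, (by linear_combination a * hγ : γ*γ*a = (1-γ)*a),
        (by linear_combination b * hγ : γ*γ*b = (1-γ)*b)]
    have ha0 : 0 ≤ a := hpos 1
    have hb0 : 0 ≤ b := hpos 2
    have hγpos : 0 < γ := gamma_pos
    have h2γ : 0 < 2 - γ := by linarith
    -- weights
    set t := max 0 ((a + b - γ)/(2 - γ)) with ht
    have ht0 : 0 ≤ t := le_max_left _ _
    have htineq : a + b - γ ≤ t * (2 - γ) := by
      have := le_max_right 0 ((a + b - γ)/(2 - γ))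
      calc a + b - γ = ((a + b - γ)/(2 - γ)) * (2 - γ) := by field_simp
        _ ≤ t * (2 - γ) := by apply mul_le_mul_of_nonneg_right this (le_of_lt h2γ)
    have hta : t ≤ a := by
      rcases max_choice 0 ((a + b - γ)/(2 - γ)) with h | h
      · rw [ht, h]; exact ha0
      · rw [ht, h]
        rw [div_le_iff₀ h2γ]
        have key : (1+γ) * (a*(2-γ) - (a+b-γ)) = 1 + γ*a - (1+γ)*b := by
          linear_combination (1-a) * hγ
        have h' : 0 ≤ (1+γ) * (a*(2-γ) - (a+b-γ)) := by rw [key]; exact I1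
        have := (mul_nonneg_iff_of_pos_left (show (0:ℝ) < 1+γ by linarith)).1 h'
        linarith
    have htb : t ≤ b := by
      rcases max_choice 0 ((a + b - γ)/(2 - γ)) with h | h
      · rw [ht, h]; exact hb0
      · rw [ht, h]
        rw [div_le_iff₀ h2γ]
        have key : (1+γ) * (b*(2-γ) - (a+b-γ)) = 1 + γ*b - (1+γ)*a := by
          linear_combination (1-b) * hγ
        have h' : 0 ≤ (1+γ) * (b*(2-γ) - (a+b-γ)) := by rw [key]; exact I2
        have := (mul_nonneg_iff_of_pos_left (show (0:ℝ) < 1+γ by linarith)).1 h'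
        linarith
    set w2 := (a - t)/γ with hw2
    set w3 := (b - t)/γ with hw3
    set w1 := 1 - t - w2 - w3 with hw1
    have hw2' : 0 ≤ w2 := div_nonneg (by linarith) (le_of_lt hγpos)
    have hw3' : 0 ≤ w3 := div_nonneg (by linarith) (le_of_lt hγpos)
    have hw1' : 0 ≤ w1 := by
      rw [hw1, hw2, hw3]
      have h1 : (a - t)/γ + (b - t)/γ ≤ 1 - t := by
        rw [← add_div, div_le_iff₀ hγpos]
        nlinarith [htineq]
      linarith
    have hsum : w1 + w2 + w3 + t = 1 := by rw [hw1]; ring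
    -- the combination
    have hcomb : μ = w1 • p₁ + w2 • p₂ + w3 • p₃ + t • p₄ := by
      funext n
      have h5 : n = 0 ∨ n = 1 ∨ n = 2 ∨ n = 3 ∨ n = 4 := by revert n; decide
      simp only [Pi.add_apply, Pi.smul_apply, smul_eq_mul]
      rcases h5 with rfl | rfl | rfl | rfl | rfl
      · simp +decide [p₁, p₂, p₃, p₄, h0]
        linarith [hsum]
      · simp +decide [p₁, p₂, p₃, p₄]
        rw [hw2]
        field_simp
        linarith
      · simp +decide [p₁, p₂, p₃, p₄]
        rw [hw3]
        field_simp
        linarith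
      · simp +decide [p₁, p₂, p₃, p₄]
        rw [hw3, h3]
        field_simp
        linarith
      · simp +decide [p₁, p₂, p₃, p₄]
        rw [hw2, h4]
        field_simp
        linarith
    rw [hcomb]
    have hmem : ∀ q ∈ ({p₁, p₂, p₃, p₄} : Set (ZMod 5 → ℝ)), q ∈ convexHull ℝ ({p₁, p₂, p₃, p₄} : Set (ZMod 5 → ℝ)) :=
      fun q hq => subset_convexHull ℝ _ hq
    have hconv := convex_convexHull ℝ ({p₁, p₂, p₃, p₄} : Set (ZMod 5 → ℝ))
    have e1 : w1 • p₁ + w2 • p₂ + w3 • p₃ + t • p₄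
        = ∑ i : Fin 4, (![w1, w2, w3, t] i) • (![p₁, p₂, p₃, p₄] i) := by
      rw [Fin.sum_univ_four]
      simp only [Matrix.cons_val_zero, Matrix.cons_val_one, Matrix.head_cons,
        Matrix.cons_val_two, Matrix.tail_cons, Matrix.cons_val_three]
    rw [e1]
    apply hconv.sum_mem
    · intro i _
      fin_cases i <;> simpa using by first | exact hw1' | exact hw2' | exact hw3' | exact ht0
    · rw [Fin.sum_univ_four]
      simp only [Matrix.cons_val_zero, Matrix.cons_val_one, Matrix.head_cons,
        Matrix.cons_val_two, Matrix.tail_cons, Matrix.cons_val_three]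
      linarith [hsum]
    · intro i _
      fin_cases i <;> simp <;> apply hmem <;> simp
  · -- backward direction
    intro hμ
    have hS : convexHull ℝ ({p₁, p₂, p₃, p₄} : Set (ZMod 5 → ℝ)) ⊆
        {ν : ZMod 5 → ℝ | (∀ n, 0 ≤ ν n) ∧ IsPosDef ν ∧ ν 0 = 1} := by
      apply convexHull_min
      · rintro q (rfl | rfl | rfl | rfl)
        · exact ⟨fun n => by dsimp [p₁]; split <;> norm_num, posdef_p1, by simp +decide [p₁]⟩
        · refine ⟨fun n => ?_, posdef_p2, by simp +decide [p₂]⟩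
          dsimp [p₂]; split
          · norm_num
          · split
            · exact gamma_nonneg
            · exact le_refl 0
        · refine ⟨fun n => ?_, posdef_p3, by simp +decide [p₃]⟩
          dsimp [p₃]; split
          · norm_num
          · split
            · exact gamma_nonneg
            · exact le_refl 0
        · exact ⟨fun n => by norm_num [p₄], posdef_p4, by norm_num [p₄]⟩
      · -- convexity
        rintro ν ⟨hν1, hν2, hν3⟩ ρ ⟨hρ1, hρ2, hρ3⟩ s r hs hr hsr
        refine ⟨fun n => ?_, ?_, ?_⟩
        · simp only [Pi.add_apply, Pi.smul_apply, smul_eq_mul]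
          exact add_nonneg (mul_nonneg hs (hν1 n)) (mul_nonneg hr (hρ1 n))
        · intro N x c
          have key : ∑ i, ∑ j, c i * (starRingEnd ℂ) (c j) * (((s • ν + r • ρ) (x i - x j) : ℝ) : ℂ)
              = (s:ℂ) * (∑ i, ∑ j, c i * (starRingEnd ℂ) (c j) * ((ν (x i - x j) : ℝ) : ℂ))
              + (r:ℂ) * (∑ i, ∑ j, c i * (starRingEnd ℂ) (c j) * ((ρ (x i - x j) : ℝ) : ℂ)) := by
            rw [Finset.mul_sum, Finset.mul_sum, ← Finset.sum_add_distrib]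
            refine Finset.sum_congr rfl fun i _ => ?_
            rw [Finset.mul_sum, Finset.mul_sum, ← Finset.sum_add_distrib]
            refine Finset.sum_congr rfl fun j _ => ?_
            simp only [Pi.add_apply, Pi.smul_apply, smul_eq_mul]
            push_cast
            ring
          rw [key]
          have c1 : (0:ℂ) ≤ (s:ℂ) := by exact_mod_cast Complex.zero_le_real.2 hs
          have c2 : (0:ℂ) ≤ (r:ℂ) := by exact_mod_cast Complex.zero_le_real.2 hr
          exact add_nonneg (mul_nonneg c1 (hν2 N x c)) (mul_nonneg c2 (hρ2 N x c))
        · simp only [Pi.add_apply, Pi.smul_apply, smul_eq_mul, hν3, hρ3]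
          linarith
    exact hS hμ
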